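/- Fix an admissible sequence of probability measures ν_n on Δ^{n-1} and an integer p ≥ 0. Let F_n : Δ^{n-1} → ℝ be any measurable function such that F_n(ℓ) = ∑_{i=0}^p C(n-1,i) for ℓ ∈ Γ_{p+2} and 0 ≤ F_n(ℓ) ≤ 2(n-1)^p everywhere on Δ^{n-1}. Then there exist constants C > 0 and 0 < a < 1 with |∫_{Δ^{n-1}} F_n dν_n − ∑_{i=0}^p C(n-1,i)| < C·a^n for all n ≥ 3. -/

import Mathlib

open MeasureTheory Finset Filter

/-- The open standard simplex Δ^m ⊂ ℝ^{m+1}. -/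
def Simplex (m : ℕ) : Set (Fin (m+1) → ℝ) :=
  {ℓ | (∀ i, 0 < ℓ i) ∧ ∑ i, ℓ i = 1}

/-- Parametrization of the hyperplane ∑ ℓ i = 1 by ℝ^m. -/
noncomputable def emb (m : ℕ) (x : Fin m → ℝ) : Fin (m+1) → ℝ :=
  Fin.snoc x (1 - ∑ i, x i)

/-- Normalized Lebesgue measure of a subset of the simplex Δ^m,
computed as a ratio of Lebesgue volumes in the parametrizing chart. -/
noncomputable def simplexMeasure (m : ℕ) (A : Set (Fin (m+1) → ℝ)) : ENNReal :=
  volume (emb m ⁻¹' A) / volume (emb m ⁻¹' (Simplex m))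

/-- The set Γ_p of length vectors for which every p-element subset is short. -/
def Gamma (m p : ℕ) : Set (Fin (m+1) → ℝ) :=
  {ℓ ∈ Simplex m | ∀ J : Finset (Fin (m+1)), J.card = p → ∑ i ∈ J, ℓ i < 1/2}

/-- The set Λ_p where some coordinate is ≥ 1/(2p). -/
def Lambda (m p : ℕ) : Set (Fin (m+1) → ℝ) :=
  {ℓ ∈ Simplex m | ∃ i, 1/(2*(p:ℝ)) ≤ ℓ i}

/-- The normalized Lebesgue measure μ_n on the simplex Δ^m ⊂ ℝ^{m+1},
as an actual measure on ℝ^{m+1} (supported on the simplex). -/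
noncomputable def simplexProb (m : ℕ) : Measure (Fin (m+1) → ℝ) :=
  (m.factorial : ENNReal) • Measure.map (emb m) (volume.restrict (emb m ⁻¹' Simplex m))


set_option maxHeartbeats 1000000

open scoped ENNReal

lemma corner_vol : ∀ (k : ℕ) (c : ℝ),
    volume {x : Fin k → ℝ | (∀ i, 0 < x i) ∧ ∑ i, x i < c}
      ≤ ENNReal.ofReal (c ^ k / k.factorial) := by
  intro k
  induction k with
  | zero =>
    intro c
    have : volume (Set.univ : Set (Fin 0 → ℝ)) = 1 := by
      rw [show (Set.univ : Set (Fin 0 → ℝ)) = Set.pi Set.univ (fun _ => Set.univ) by simp,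
        volume_pi_pi]
      simp
    calc volume {x : Fin 0 → ℝ | (∀ i, 0 < x i) ∧ ∑ i, x i < c}
        ≤ volume (Set.univ : Set (Fin 0 → ℝ)) := measure_mono (Set.subset_univ _)
      _ = 1 := this
      _ ≤ ENNReal.ofReal (c ^ 0 / (0:ℕ).factorial) := by simp
  | succ k ih =>
    intro c
    rcases le_or_gt c 0 with hc | hc
    · have : {x : Fin (k+1) → ℝ | (∀ i, 0 < x i) ∧ ∑ i, x i < c} = ∅ := by
        ext x
        simp only [Set.mem_setOf_eq, Set.mem_empty_iff_false, iff_false, not_and]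
        intro hx hs
        have : (0:ℝ) < ∑ i, x i := Finset.sum_pos (fun i _ => hx i) ⟨0, Finset.mem_univ 0⟩
        linarith
      rw [this]; simp
    set e := MeasurableEquiv.piFinSuccAbove (fun _ : Fin (k+1) => ℝ) 0 with he
    set B : Set (ℝ × (Fin k → ℝ)) :=
      {q | 0 < q.1 ∧ (∀ i, 0 < q.2 i) ∧ q.1 + ∑ i, q.2 i < c} with hB
    have hBmeas : MeasurableSet B := by
      have h1 : MeasurableSet {q : ℝ × (Fin k → ℝ) | 0 < q.1} :=
        measurableSet_lt measurable_const measurable_fst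
      have h2 : MeasurableSet {q : ℝ × (Fin k → ℝ) | ∀ i, 0 < q.2 i} := by
        rw [show {q : ℝ × (Fin k → ℝ) | ∀ i, 0 < q.2 i} = ⋂ i, {q | 0 < q.2 i} by
          ext q; simp]
        exact MeasurableSet.iInter fun i =>
          measurableSet_lt measurable_const (measurable_snd.eval)
      have h3 : MeasurableSet {q : ℝ × (Fin k → ℝ) | q.1 + ∑ i, q.2 i < c} :=
        measurableSet_lt (measurable_fst.add
          (Finset.measurable_sum Finset.univ fun i _ => measurable_snd.eval))
          measurable_const
      exact h1.inter (h2.inter h3)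
    have hpre : {x : Fin (k+1) → ℝ | (∀ i, 0 < x i) ∧ ∑ i, x i < c} = e ⁻¹' B := by
      ext x
      have hx : e x = (x 0, fun j => x (Fin.succAbove 0 j)) := rfl
      simp only [Set.mem_preimage, hx, hB, Set.mem_setOf_eq, Fin.succAbove_zero]
      rw [Fin.forall_fin_succ, Fin.sum_univ_succ]
      tauto
    rw [hpre, (volume_preserving_piFinSuccAbove (fun _ : Fin (k+1) => ℝ) 0).measure_preimage
      hBmeas.nullMeasurableSet, Measure.volume_eq_prod, Measure.prod_apply hBmeas]
    have hslice : ∀ t : ℝ, volume (Prod.mk t ⁻¹' B)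
        ≤ (Set.Ioo (0:ℝ) c).indicator (fun t => ENNReal.ofReal ((c - t) ^ k / k.factorial)) t := by
      intro t
      by_cases ht : t ∈ Set.Ioo (0:ℝ) c
      · rw [Set.indicator_of_mem ht]
        refine le_trans (measure_mono ?_) (ih (c - t))
        intro y hy
        obtain ⟨_, h2, h3⟩ := hy
        exact ⟨h2, by linarith⟩
      · rw [Set.indicator_of_notMem ht]
        convert (zero_le : (0:ℝ≥0∞) ≤ _)
        rw [show (0:ENNReal) = volume (∅ : Set (Fin k → ℝ)) by simp]
        congr 1
        ext y
        simp only [Set.mem_preimage, hB, Set.mem_setOf_eq, Set.mem_empty_iff_false, iff_false,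
          not_and]
        intro h1 h2
        simp only [Set.mem_Ioo, not_and, not_lt] at ht
        have hsum : (0:ℝ) ≤ ∑ i, y i := Finset.sum_nonneg fun i _ => (h2 i).le
        have := ht h1
        linarith
    calc ∫⁻ t, volume (Prod.mk t ⁻¹' B)
        ≤ ∫⁻ t, (Set.Ioo (0:ℝ) c).indicator
            (fun t => ENNReal.ofReal ((c - t) ^ k / k.factorial)) t := lintegral_mono hslice
      _ = ∫⁻ t in Set.Ioo (0:ℝ) c, ENNReal.ofReal ((c - t) ^ k / k.factorial) :=
          lintegral_indicator measurableSet_Ioo _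
      _ = ENNReal.ofReal (∫ t in Set.Ioo (0:ℝ) c, (c - t) ^ k / k.factorial) := by
          rw [← ofReal_integral_eq_lintegral_ofReal]
          · exact (((continuous_const.sub continuous_id).pow k).div_const _).integrableOn_Icc.mono_set
              Set.Ioo_subset_Icc_self
          · refine (ae_restrict_iff' measurableSet_Ioo).2 (ae_of_all _ fun t ht => ?_)
            have : (0:ℝ) ≤ (c - t) ^ k := pow_nonneg (by linarith [ht.2]) k
            positivity
      _ ≤ ENNReal.ofReal (c ^ (k+1) / (k+1).factorial) := by
          apply ENNReal.ofReal_le_ofReal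
          rw [← MeasureTheory.integral_Ioc_eq_integral_Ioo,
            ← intervalIntegral.integral_of_le hc.le]
          rw [show (fun t => (c - t) ^ k / (k.factorial:ℝ)) = fun t => (c - t) ^ k * (k.factorial:ℝ)⁻¹ by
            ext t; ring]
          rw [intervalIntegral.integral_mul_const, intervalIntegral.integral_comp_sub_left
            (fun s => s ^ k) c]
          simp only [sub_self, sub_zero, integral_pow]
          rw [Nat.factorial_succ]
          push_cast
          rw [← div_eq_mul_inv, div_div, zero_pow (Nat.succ_ne_zero k), sub_zero]

lemma measurableSet_corner {ι : Type*} [Fintype ι] (c : ℝ) :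
    MeasurableSet {x : ι → ℝ | (∀ i, 0 < x i) ∧ ∑ i, x i < c} := by
  have h1 : MeasurableSet {x : ι → ℝ | ∀ i, 0 < x i} := by
    rw [show {x : ι → ℝ | ∀ i, 0 < x i} = ⋂ i, {x | 0 < x i} by ext; simp]
    exact MeasurableSet.iInter fun i => measurableSet_lt measurable_const (measurable_pi_apply i)
  exact h1.inter (measurableSet_lt
    (Finset.measurable_sum Finset.univ fun i _ => measurable_pi_apply i) measurable_const)

lemma corner_vol' {ι : Type*} [Fintype ι] (c : ℝ) :
    volume {x : ι → ℝ | (∀ i, 0 < x i) ∧ ∑ i, x i < c}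
      ≤ ENNReal.ofReal (c ^ (Fintype.card ι) / (Fintype.card ι).factorial) := by
  classical
  set n := Fintype.card ι
  have e0 : Fin n ≃ ι := (Fintype.equivFin ι).symm
  have hmp := volume_measurePreserving_piCongrLeft (fun _ : ι => ℝ) e0
  have hpre : (MeasurableEquiv.piCongrLeft (fun _ : ι => ℝ) e0) ⁻¹'
      {x : ι → ℝ | (∀ i, 0 < x i) ∧ ∑ i, x i < c}
      = {y : Fin n → ℝ | (∀ j, 0 < y j) ∧ ∑ j, y j < c} := by
    ext y
    have happ : ∀ j, (MeasurableEquiv.piCongrLeft (fun _ : ι => ℝ) e0) y (e0 j) = y j := by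
      intro j
      exact Equiv.piCongrLeft_apply_apply (fun _ : ι => ℝ) e0 y j
    have hsum : ∑ i, (MeasurableEquiv.piCongrLeft (fun _ : ι => ℝ) e0) y i = ∑ j, y j := by
      rw [← Equiv.sum_comp e0 (fun i => (MeasurableEquiv.piCongrLeft (fun _ : ι => ℝ) e0) y i)]
      exact Finset.sum_congr rfl fun j _ => happ j
    have hall : (∀ i, 0 < (MeasurableEquiv.piCongrLeft (fun _ : ι => ℝ) e0) y i)
        ↔ ∀ j, 0 < y j := by
      constructor
      · intro h j; rw [← happ j]; exact h (e0 j)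
      · intro h i
        have := h (e0.symm i)
        rw [← happ (e0.symm i)] at this
        simpa using this
    simp only [Set.mem_preimage, Set.mem_setOf_eq, hsum, hall]
  calc volume {x : ι → ℝ | (∀ i, 0 < x i) ∧ ∑ i, x i < c}
      = volume ((MeasurableEquiv.piCongrLeft (fun _ : ι => ℝ) e0) ⁻¹'
          {x : ι → ℝ | (∀ i, 0 < x i) ∧ ∑ i, x i < c}) :=
        (hmp.measure_preimage (measurableSet_corner c).nullMeasurableSet).symm
    _ = volume {y : Fin n → ℝ | (∀ j, 0 < y j) ∧ ∑ j, y j < c} := by rw [hpre]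
    _ ≤ ENNReal.ofReal (c ^ n / n.factorial) := corner_vol n c

lemma slab_vol {m : ℕ} (K : Finset (Fin m)) (c : ℝ) :
    volume {x : Fin m → ℝ | (∀ i, x i ∈ Set.Ioo (0:ℝ) 1) ∧ ∑ i ∈ K, x i < c}
      ≤ ENNReal.ofReal (c ^ K.card / K.card.factorial) := by
  classical
  letI : Fintype {i // i ∈ K} := Subtype.fintype _
  set e := MeasurableEquiv.piEquivPiSubtypeProd (fun _ : Fin m => ℝ) (· ∈ K) with he
  set A1 : Set ({i // i ∈ K} → ℝ) := {v | (∀ j, 0 < v j) ∧ ∑ j, v j < c} with hA1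
  set A2 : Set ({i // ¬ i ∈ K} → ℝ) := Set.univ.pi fun _ => Set.Ioo (0:ℝ) 1 with hA2
  have hA1m : MeasurableSet A1 := measurableSet_corner c
  have hA2m : MeasurableSet A2 :=
    MeasurableSet.univ_pi fun _ => measurableSet_Ioo
  have hsub : {x : Fin m → ℝ | (∀ i, x i ∈ Set.Ioo (0:ℝ) 1) ∧ ∑ i ∈ K, x i < c}
      ⊆ e ⁻¹' (A1 ×ˢ A2) := by
    rintro x ⟨h1, h2⟩
    have hex : e x = (fun j => x j.1, fun j => x j.1) := rfl
    rw [Set.mem_preimage, hex, Set.mem_prod]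
    refine ⟨⟨fun j => (h1 j.1).1, ?_⟩, fun j _ => h1 j.1⟩
    rw [show ∑ j : {i // i ∈ K}, x j.1 = ∑ i ∈ K, x i from
      (Finset.sum_subtype K (fun _ => Iff.rfl) x).symm]
    exact h2
  calc volume {x : Fin m → ℝ | (∀ i, x i ∈ Set.Ioo (0:ℝ) 1) ∧ ∑ i ∈ K, x i < c}
      ≤ volume (e ⁻¹' (A1 ×ˢ A2)) := measure_mono hsub
    _ = volume (A1 ×ˢ A2) :=
        (volume_preserving_piEquivPiSubtypeProd (fun _ : Fin m => ℝ) (· ∈ K)).measure_preimage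
          (hA1m.prod hA2m).nullMeasurableSet
    _ = volume A1 * volume A2 := by
        rw [Measure.volume_eq_prod, Measure.prod_prod]
    _ ≤ ENNReal.ofReal (c ^ K.card / K.card.factorial) * 1 := by
        apply mul_le_mul'
        · have := corner_vol' (ι := {i // i ∈ K}) c
          rwa [Fintype.card_coe] at this
        · rw [hA2, volume_pi_pi]
          simp
    _ = ENNReal.ofReal (c ^ K.card / K.card.factorial) := mul_one _

lemma measurable_emb (m : ℕ) : Measurable (emb m) := by
  unfold emb
  apply measurable_pi_iff.2
  intro i
  refine Fin.lastCases ?_ ?_ i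
  · simpa [Pi.sub_def] using (measurable_const.sub
      (Finset.measurable_sum Finset.univ fun j _ => measurable_pi_apply j))
  · intro j
    simpa using measurable_pi_apply j

lemma measurableSet_simplex (m : ℕ) : MeasurableSet (Simplex m) := by
  have h1 : MeasurableSet {ℓ : Fin (m+1) → ℝ | ∀ i, 0 < ℓ i} := by
    rw [show {ℓ : Fin (m+1) → ℝ | ∀ i, 0 < ℓ i} = ⋂ i, {ℓ | 0 < ℓ i} by ext; simp]
    exact MeasurableSet.iInter fun i => measurableSet_lt measurable_const (measurable_pi_apply i)
  have h2 : MeasurableSet {ℓ : Fin (m+1) → ℝ | ∑ i, ℓ i = 1} :=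
    (Finset.measurable_sum Finset.univ fun j _ => measurable_pi_apply j)
      (measurableSet_singleton 1)
  exact h1.inter h2

lemma measurableSet_gamma (m q : ℕ) : MeasurableSet (Gamma m q) := by
  have h2 : MeasurableSet {ℓ : Fin (m+1) → ℝ |
      ∀ J : Finset (Fin (m+1)), J.card = q → ∑ i ∈ J, ℓ i < 1/2} := by
    rw [show {ℓ : Fin (m+1) → ℝ | ∀ J : Finset (Fin (m+1)), J.card = q → ∑ i ∈ J, ℓ i < 1/2}
      = ⋂ (J : Finset (Fin (m+1))) (_ : J.card = q), {ℓ | ∑ i ∈ J, ℓ i < 1/2} by ext; simp]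
    exact MeasurableSet.iInter fun J => MeasurableSet.iInter fun _ =>
      measurableSet_lt (Finset.measurable_sum J fun j _ => measurable_pi_apply j) measurable_const
  exact (measurableSet_simplex m).inter h2

lemma fact_le_mul (k : ℕ) : ∀ n : ℕ, k ≤ n → n.factorial ≤ k.factorial * (n+1)^(n-k) := by
  intro n h
  induction n, h using Nat.le_induction with
  | base => simp
  | succ n hkn ih =>
    rw [Nat.factorial_succ]
    calc (n+1) * n.factorial ≤ (n+1) * (k.factorial * (n+1)^(n-k)) :=
          Nat.mul_le_mul_left _ ih
      _ = k.factorial * (n+1)^(n-k+1) := by ring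
      _ ≤ k.factorial * ((n+1)+1)^(n+1-k) := by
          apply Nat.mul_le_mul_left
          rw [show n+1-k = n-k+1 from by omega]
          exact Nat.pow_le_pow_left (by omega) _

lemma mu_bad (m q : ℕ) (c' : ℝ) (h1 : 1/2 < c') (h2 : c' < 1) :
    simplexProb m (Simplex m \ Gamma m q)
      ≤ ENNReal.ofReal (((m:ℝ)+1)^(2*q) * 2^q * c'^m) := by
  classical
  have hc'0 : 0 < c' := by linarith
  set D := Simplex m with hD
  set G := Gamma m q with hG
  have hDGmeas : MeasurableSet (D \ G) := (measurableSet_simplex m).diff (measurableSet_gamma m q)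
  set K : Finset (Fin (m+1)) → Finset (Fin m) :=
    fun J => Finset.univ.filter (fun i : Fin m => Fin.castSucc i ∉ J) with hK
  set W : Finset (Fin (m+1)) → Set (Fin m → ℝ) :=
    fun J => {x | (∀ i, x i ∈ Set.Ioo (0:ℝ) 1) ∧ ∑ i ∈ K J, x i < c'} with hW
  have hcover : emb m ⁻¹' (D \ G) ⊆
      ⋃ J ∈ Finset.powersetCard q (Finset.univ : Finset (Fin (m+1))), W J := by
    intro x hx
    obtain ⟨hxD, hxG⟩ := hx
    have hx0 : ∀ i : Fin m, 0 < x i := by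
      intro i
      have := hxD.1 (Fin.castSucc i)
      rwa [emb, Fin.snoc_castSucc] at this
    have hxlast : 0 < 1 - ∑ i, x i := by
      have := hxD.1 (Fin.last m)
      rwa [emb, Fin.snoc_last] at this
    have hxsum : ∑ i, x i < 1 := by linarith
    have : ∃ J : Finset (Fin (m+1)), J.card = q ∧ ¬ (∑ i ∈ J, emb m x i < 1/2) := by
      by_contra hno
      push_neg at hno
      exact hxG ⟨hxD, fun J hJ => hno J hJ⟩
    obtain ⟨J, hJcard, hJge⟩ := this
    push_neg at hJge
    refine Set.mem_biUnion (Finset.mem_powersetCard_univ.2 hJcard) ?_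
    have hsumJ : ∑ j ∈ J, emb m x j
        = (∑ i ∈ Finset.univ.filter (fun i : Fin m => Fin.castSucc i ∈ J), x i)
          + (if Fin.last m ∈ J then (1 - ∑ i, x i) else 0) := by
      have e1 : ∑ j ∈ J, emb m x j = ∑ j : Fin (m+1), if j ∈ J then emb m x j else 0 := by
        rw [Finset.sum_ite_mem, Finset.univ_inter]
      rw [e1, Fin.sum_univ_castSucc]
      congr 1
      · rw [Finset.sum_filter]
        refine Finset.sum_congr rfl fun i _ => ?_
        by_cases h : Fin.castSucc i ∈ J <;> simp [h, emb, Fin.snoc_castSucc]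
      · by_cases h : Fin.last m ∈ J <;> simp [h, emb, Fin.snoc_last]
    have hsplit : (∑ i ∈ Finset.univ.filter (fun i : Fin m => Fin.castSucc i ∈ J), x i)
        + (∑ i ∈ K J, x i) = ∑ i, x i := by
      rw [hK]
      exact Finset.sum_filter_add_sum_filter_not Finset.univ _ x
    refine ⟨fun i => ⟨hx0 i, ?_⟩, ?_⟩
    · have hle : x i ≤ ∑ j, x j :=
        Finset.single_le_sum (fun j _ => (hx0 j).le) (Finset.mem_univ i)
      linarith
    · by_cases hlast : Fin.last m ∈ J
      · rw [hsumJ, if_pos hlast] at hJge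
        linarith
      · rw [hsumJ, if_neg hlast] at hJge
        linarith
  calc simplexProb m (D \ G)
      = (m.factorial : ℝ≥0∞) * volume (emb m ⁻¹' (D \ G)) := by
        rw [simplexProb, Measure.smul_apply, smul_eq_mul,
          Measure.map_apply (measurable_emb m) hDGmeas,
          Measure.restrict_apply (measurable_emb m hDGmeas)]
        rw [Set.inter_eq_left.2 (Set.preimage_mono (Set.diff_subset (s := D) (t := G)))]
    _ ≤ (m.factorial : ℝ≥0∞) * ∑ J ∈ Finset.powersetCard q (Finset.univ : Finset (Fin (m+1))),
          volume (W J) :=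
        mul_le_mul' le_rfl (le_trans (measure_mono hcover) (measure_biUnion_finset_le _ _))
    _ ≤ (m.factorial : ℝ≥0∞) * ∑ J ∈ Finset.powersetCard q (Finset.univ : Finset (Fin (m+1))),
          ENNReal.ofReal (((m:ℝ)+1)^q * 2^q * c'^m / m.factorial) := by
        apply mul_le_mul' le_rfl
        apply Finset.sum_le_sum
        intro J hJ
        have hJcard : J.card = q := Finset.mem_powersetCard_univ.1 hJ
        refine le_trans (slab_vol (K J) c') (ENNReal.ofReal_le_ofReal ?_)
        set k := (K J).card with hk
        set d := (Finset.univ.filter (fun i : Fin m => Fin.castSucc i ∈ J)).card with hd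
        have hkd : d + k = m := by
          have := Finset.card_filter_add_card_filter_not
            (s := (Finset.univ : Finset (Fin m))) (p := fun i : Fin m => Fin.castSucc i ∈ J)
          simpa [hK, hk, hd] using this
        have hdq : d ≤ q := by
          rw [hd, ← hJcard]
          apply Finset.card_le_card_of_injOn (fun i => Fin.castSucc i)
          · intro i hi
            simpa using (Finset.mem_filter.1 hi).2
          · exact fun i _ j _ h => Fin.castSucc_injective m h
        have hkm : k ≤ m := by omega
        have hfact : (m.factorial : ℝ) ≤ (k.factorial : ℝ) * ((m:ℝ)+1)^q := by
          have h := fact_le_mul k m hkm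
          have h' : (((m+1)^(m-k) : ℕ) : ℝ) ≤ ((m:ℝ)+1)^q := by
            push_cast
            exact pow_le_pow_right₀ (by linarith [Nat.cast_nonneg' (α := ℝ) m]) (by omega)
          calc (m.factorial:ℝ) ≤ ((k.factorial * (m+1)^(m-k) : ℕ) : ℝ) := by exact_mod_cast h
            _ = (k.factorial:ℝ) * (((m+1)^(m-k) : ℕ):ℝ) := by push_cast; ring
            _ ≤ (k.factorial:ℝ) * ((m:ℝ)+1)^q :=
                mul_le_mul_of_nonneg_left h' (Nat.cast_nonneg _)
        have h2c : (1:ℝ) ≤ 2^d * c'^d := by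
          have : (1:ℝ) ≤ (2*c')^d := one_le_pow₀ (by linarith)
          rwa [mul_pow] at this
        have hsplitpow : c'^m = c'^k * c'^d := by
          rw [← pow_add]
          congr 1
          omega
        rw [div_le_div_iff₀ (by positivity) (by positivity)]
        calc c'^k * (m.factorial:ℝ)
            ≤ c'^k * ((k.factorial:ℝ) * ((m:ℝ)+1)^q) :=
              mul_le_mul_of_nonneg_left hfact (by positivity)
          _ ≤ (c'^k * ((k.factorial:ℝ) * ((m:ℝ)+1)^q)) * (2^d * c'^d) :=
              le_mul_of_one_le_right (by positivity) h2c
          _ ≤ (c'^k * ((k.factorial:ℝ) * ((m:ℝ)+1)^q)) * (2^q * c'^d) := by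
              apply mul_le_mul_of_nonneg_left _ (by positivity)
              exact mul_le_mul_of_nonneg_right
                (pow_le_pow_right₀ one_le_two hdq) (by positivity)
          _ = ((m:ℝ)+1)^q * 2^q * c'^m * (k.factorial:ℝ) := by
              rw [hsplitpow]; ring
    _ ≤ ENNReal.ofReal (((m:ℝ)+1)^(2*q) * 2^q * c'^m) := by
        rw [Finset.sum_const, Finset.card_powersetCard, Finset.card_univ, Fintype.card_fin,
          nsmul_eq_mul]
        have hmf : (0:ℝ) < m.factorial := by exact_mod_cast m.factorial_pos
        have hch : (((m+1).choose q : ℕ):ℝ) ≤ ((m:ℝ)+1)^q := by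
          have := Nat.choose_le_pow (m+1) q
          exact_mod_cast this
        calc (m.factorial : ℝ≥0∞) * ((((m+1).choose q : ℕ)) *
              ENNReal.ofReal (((m:ℝ)+1)^q * 2^q * c'^m / m.factorial))
            = ENNReal.ofReal ((m.factorial:ℝ) * (((m+1).choose q : ℕ) *
                (((m:ℝ)+1)^q * 2^q * c'^m / m.factorial))) := by
              rw [ENNReal.ofReal_mul (by positivity), ENNReal.ofReal_mul (by positivity)]
              rw [ENNReal.ofReal_natCast, ENNReal.ofReal_natCast]
          _ ≤ ENNReal.ofReal (((m:ℝ)+1)^(2*q) * 2^q * c'^m) := by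
              apply ENNReal.ofReal_le_ofReal
              have e1 : (m.factorial:ℝ) * (((m+1).choose q : ℕ) *
                  (((m:ℝ)+1)^q * 2^q * c'^m / m.factorial))
                  = (((m+1).choose q : ℕ):ℝ) * (((m:ℝ)+1)^q * 2^q * c'^m) := by
                field_simp
                try ring
              rw [e1, two_mul, pow_add]
              calc (((m+1).choose q : ℕ):ℝ) * (((m:ℝ)+1)^q * 2^q * c'^m)
                  ≤ ((m:ℝ)+1)^q * (((m:ℝ)+1)^q * 2^q * c'^m) :=
                    mul_le_mul_of_nonneg_right hch (by positivity)
                _ = ((m:ℝ)+1)^q * ((m:ℝ)+1)^q * 2^q * c'^m := by ring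

/-- abstract averaging theorem: if ν_n = f_n·μ_n is an admissible
sequence of probability measures and F_n is measurable, equal to ∑_{i=0}^p C(n-1,i)
on Γ_{p+2} and with 0 ≤ F_n ≤ 2(n-1)^p on Δ^{n-1}, then
|∫ F_n dν_n − ∑_{i=0}^p C(n-1,i)| < C·aⁿ for all n ≥ 3 (n = m+1). -/
theorem stmt16 (f : (m : ℕ) → (Fin (m+1) → ℝ) → ℝ)
    (hmeas : ∀ m, Measurable (f m))
    (hnonneg : ∀ m ℓ, 0 ≤ f m ℓ)
    (hprob : ∀ m, ∫⁻ ℓ, ENNReal.ofReal (f m ℓ) ∂(simplexProb m) = 1)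
    (hadm : ∀ p : ℕ, 1 ≤ p → ∃ A > (0:ℝ), ∃ b ∈ Set.Ioo (0:ℝ) 2,
        ∀ m : ℕ, ∀ ℓ ∈ Lambda m p, f m ℓ ≤ A * b^(m+1))
    (p : ℕ) (F : (m : ℕ) → (Fin (m+1) → ℝ) → ℝ)
    (hFmeas : ∀ m, Measurable (F m))
    (hFconst : ∀ m : ℕ, ∀ ℓ ∈ Gamma m (p+2),
        F m ℓ = ∑ i ∈ Finset.range (p+1), (Nat.choose m i : ℝ))
    (hFbd : ∀ m : ℕ, ∀ ℓ ∈ Simplex m, 0 ≤ F m ℓ ∧ F m ℓ ≤ 2 * (m:ℝ)^p) :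
    ∃ C > (0:ℝ), ∃ a ∈ Set.Ioo (0:ℝ) 1, ∀ m : ℕ, 2 ≤ m →
      |(∫ ℓ, F m ℓ
            ∂((simplexProb m).withDensity (fun ℓ => ENNReal.ofReal (f m ℓ))))
          - ∑ i ∈ Finset.range (p+1), (Nat.choose m i : ℝ)|
        < C * a^(m+1) := by
  classical
  obtain ⟨A, hA, b, hb, hbound⟩ := hadm (p+2) (by omega)
  obtain ⟨hb0, hb2⟩ := hb
  set q : ℕ := p + 2 with hqdef
  set c' : ℝ := 2 / (b + 2) with hc'
  have hc'half : 1/2 < c' := by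
    rw [hc', lt_div_iff₀ (by linarith)]
    linarith
  have hc'lt1 : c' < 1 := by
    rw [hc', div_lt_one (by linarith)]
    linarith
  have hc'pos : 0 < c' := by linarith
  set t : ℝ := b * c' with htdef
  have ht0 : 0 < t := mul_pos hb0 hc'pos
  have ht1 : t < 1 := by
    have : b * c' = 2*b/(b+2) := by rw [hc']; ring
    rw [htdef, this, div_lt_one (by linarith)]
    linarith
  set a : ℝ := (1 + t)/2 with hadef
  have hta : t < a := by rw [hadef]; linarith
  have ha1 : a < 1 := by rw [hadef]; linarith
  have ha0 : 0 < a := by rw [hadef]; linarith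
  set s : ℝ := t / a with hsdef
  have hs0 : 0 < s := div_pos ht0 ha0
  have hs1 : s < 1 := by rw [hsdef, div_lt_one ha0]; exact hta
  have hsa : s * a = t := div_mul_cancel₀ t (ne_of_gt ha0)
  set r : ℕ := p + 2*q with hrdef
  have hgeo : Tendsto (fun n : ℕ => (n:ℝ)^r * s^n) atTop (nhds 0) :=
    (summable_pow_mul_geometric_of_norm_lt_one (R := ℝ) r
      (by rw [Real.norm_eq_abs, abs_of_pos hs0]; exact hs1)).tendsto_atTop_zero
  obtain ⟨C₀, hC₀⟩ := hgeo.bddAbove_range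
  set C₁ : ℝ := max C₀ 1 with hC₁def
  have hC₁pos : 0 < C₁ := lt_of_lt_of_le one_pos (le_max_right _ _)
  have hC₁ : ∀ n : ℕ, (n:ℝ)^r * s^n ≤ C₁ := fun n =>
    le_trans (hC₀ (Set.mem_range_self n)) (le_max_left _ _)
  set K₁ : ℝ := ((p:ℝ)+3) * A * 2^q * b with hK₁def
  have hK₁pos : 0 < K₁ := by
    apply mul_pos (mul_pos (mul_pos _ hA) _) hb0
    · positivity
    · positivity
  set C : ℝ := K₁ * C₁ / (s * a) + 1 with hCdef
  have hCpos : 0 < C := by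
    have h : 0 < K₁ * C₁ / (s * a) := div_pos (mul_pos hK₁pos hC₁pos) (mul_pos hs0 ha0)
    rw [hCdef]
    linarith
  refine ⟨C, hCpos, a, ⟨ha0, ha1⟩, ?_⟩
  intro m hm
  set μ : Measure (Fin (m+1) → ℝ) := simplexProb m with hμdef
  set g : (Fin (m+1) → ℝ) → ℝ≥0∞ := fun ℓ => ENNReal.ofReal (f m ℓ) with hgdef
  set ν : Measure (Fin (m+1) → ℝ) := μ.withDensity g with hνdef
  set S : ℝ := ∑ i ∈ Finset.range (p+1), (Nat.choose m i : ℝ) with hSdef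
  have hS0 : 0 ≤ S := Finset.sum_nonneg fun i _ => Nat.cast_nonneg _
  have hSbound : S ≤ ((p:ℝ)+1) * ((m:ℝ)+1)^p := by
    rw [hSdef]
    calc ∑ i ∈ Finset.range (p+1), (Nat.choose m i : ℝ)
        ≤ ∑ _i ∈ Finset.range (p+1), ((m:ℝ)+1)^p := by
          apply Finset.sum_le_sum
          intro i hi
          have h1 : (Nat.choose m i : ℝ) ≤ (m:ℝ)^i := by
            exact_mod_cast Nat.choose_le_pow m i
          have h2 : (m:ℝ)^i ≤ ((m:ℝ)+1)^i :=
            pow_le_pow_left₀ (Nat.cast_nonneg m) (by linarith) i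
          have h3 : ((m:ℝ)+1)^i ≤ ((m:ℝ)+1)^p :=
            pow_le_pow_right₀ (by linarith [Nat.cast_nonneg (α := ℝ) m])
              (Nat.lt_succ_iff.1 (Finset.mem_range.1 hi))
          linarith
      _ ≤ ((p:ℝ)+1) * ((m:ℝ)+1)^p := by
          rw [Finset.sum_const, Finset.card_range, nsmul_eq_mul]
          apply le_of_eq
          push_cast
          ring
  -- measurability and basic structure
  have hDmeas : MeasurableSet (Simplex m) := measurableSet_simplex m
  have hGmeas : MeasurableSet (Gamma m q) := measurableSet_gamma m q
  have hDGmeas : MeasurableSet (Simplex m \ Gamma m q) := hDmeas.diff hGmeas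
  have hν_univ : ν Set.univ = 1 := by
    rw [hνdef, withDensity_apply _ MeasurableSet.univ, Measure.restrict_univ]
    exact hprob m
  haveI : IsProbabilityMeasure ν := ⟨hν_univ⟩
  have hμDc : μ (Simplex m)ᶜ = 0 := by
    rw [hμdef, simplexProb, Measure.smul_apply, smul_eq_mul,
      Measure.map_apply (measurable_emb m) hDmeas.compl,
      Measure.restrict_apply ((measurable_emb m) hDmeas.compl)]
    rw [Set.preimage_compl, Set.compl_inter_self]
    simp
  have hνDc : ν (Simplex m)ᶜ = 0 := by
    rw [hνdef, withDensity_apply _ hDmeas.compl]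
    exact setLIntegral_measure_zero _ _ hμDc
  have hae : ∀ᵐ ℓ ∂ν, ℓ ∈ Simplex m := by
    rw [ae_iff]
    exact hνDc
  set M : ℝ := 2*(m:ℝ)^p + S with hMdef
  have hmp0 : (0:ℝ) ≤ (m:ℝ)^p := by positivity
  have hM0 : 0 ≤ M := by rw [hMdef]; linarith
  have hFint : Integrable (F m) ν := by
    refine Integrable.mono' (integrable_const M) (hFmeas m).aestronglyMeasurable ?_
    filter_upwards [hae] with ℓ hℓ
    obtain ⟨h1, h2⟩ := hFbd m ℓ hℓ
    rw [Real.norm_eq_abs, abs_of_nonneg h1, hMdef]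
    linarith
  have hsplit : (∫ ℓ, F m ℓ ∂ν) - S = ∫ ℓ, (F m ℓ - S) ∂ν := by
    rw [integral_sub hFint (integrable_const S), integral_const, probReal_univ]
    simp
  have hkey : ∫⁻ ℓ, ENNReal.ofReal ‖F m ℓ - S‖ ∂ν
      ≤ ENNReal.ofReal M * ν (Simplex m \ Gamma m q) := by
    have hle : ∀ᵐ ℓ ∂ν, ENNReal.ofReal ‖F m ℓ - S‖ ≤
        (Simplex m \ Gamma m q).indicator (fun _ => ENNReal.ofReal M) ℓ := by
      filter_upwards [hae] with ℓ hℓ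
      by_cases hG : ℓ ∈ Gamma m q
      · rw [hFconst m ℓ hG, ← hSdef, sub_self, norm_zero, ENNReal.ofReal_zero]
        exact zero_le
      · have hmem : ℓ ∈ Simplex m \ Gamma m q := (Set.mem_diff ℓ).2 ⟨hℓ, hG⟩
        rw [Set.indicator_of_mem hmem]
        apply ENNReal.ofReal_le_ofReal
        obtain ⟨h1, h2⟩ := hFbd m ℓ hℓ
        rw [Real.norm_eq_abs, abs_le, hMdef]
        constructor <;> linarith
    calc ∫⁻ ℓ, ENNReal.ofReal ‖F m ℓ - S‖ ∂ν
        ≤ ∫⁻ ℓ, (Simplex m \ Gamma m q).indicator (fun _ => ENNReal.ofReal M) ℓ ∂ν :=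
          lintegral_mono_ae hle
      _ = ENNReal.ofReal M * ν (Simplex m \ Gamma m q) := by
          rw [lintegral_indicator hDGmeas, setLIntegral_const]
  have hbadLambda : Simplex m \ Gamma m q ⊆ Lambda m q := by
    rintro ℓ ⟨hD, hG⟩
    refine ⟨hD, ?_⟩
    have hex : ∃ J : Finset (Fin (m+1)), J.card = q ∧ ¬ (∑ i ∈ J, ℓ i < 1/2) := by
      by_contra hno
      push_neg at hno
      exact hG ⟨hD, fun J hJ => hno J hJ⟩
    obtain ⟨J, hJcard, hJge⟩ := hex
    push_neg at hJge
    by_contra hno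
    push_neg at hno
    have hJne : J.Nonempty := Finset.card_pos.1 (by rw [hJcard, hqdef]; omega)
    have hq0 : (0:ℝ) < (q:ℝ) := by rw [hqdef]; positivity
    have hlt : ∑ i ∈ J, ℓ i < ∑ _i ∈ J, 1/(2*(q:ℝ)) :=
      Finset.sum_lt_sum_of_nonempty hJne fun i _ => hno i
    rw [Finset.sum_const, hJcard, nsmul_eq_mul] at hlt
    have hqq : (q:ℝ) * (1/(2*(q:ℝ))) = 1/2 := by field_simp
    rw [hqq] at hlt
    linarith
  have hν_bad : ν (Simplex m \ Gamma m q)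
      ≤ ENNReal.ofReal (A * b^(m+1)) * μ (Simplex m \ Gamma m q) := by
    rw [hνdef, withDensity_apply _ hDGmeas]
    calc ∫⁻ ℓ in Simplex m \ Gamma m q, g ℓ ∂μ
        ≤ ∫⁻ _ℓ in Simplex m \ Gamma m q, ENNReal.ofReal (A*b^(m+1)) ∂μ := by
          apply setLIntegral_mono measurable_const
          intro ℓ hℓ
          exact ENNReal.ofReal_le_ofReal (hbound m ℓ (hbadLambda hℓ))
      _ = ENNReal.ofReal (A*b^(m+1)) * μ (Simplex m \ Gamma m q) := setLIntegral_const _ _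
  have hμ_bad : μ (Simplex m \ Gamma m q)
      ≤ ENNReal.ofReal (((m:ℝ)+1)^(2*q) * 2^q * c'^m) :=
    mu_bad m q c' hc'half hc'lt1
  set P : ℝ := ((m:ℝ)+1)^(2*q) * 2^q * c'^m with hPdef
  have hP0 : 0 ≤ P := by rw [hPdef]; positivity
  have hAb0 : 0 ≤ A * b^(m+1) := mul_nonneg hA.le (pow_nonneg hb0.le _)
  have habs : |(∫ ℓ, F m ℓ ∂ν) - S| ≤ M * ((A * b^(m+1)) * P) := by
    rw [hsplit, ← Real.norm_eq_abs]
    refine le_trans (norm_integral_le_lintegral_norm _) ?_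
    have hfin : ENNReal.ofReal M * (ENNReal.ofReal (A*b^(m+1)) * ENNReal.ofReal P) ≠ ⊤ :=
      ENNReal.mul_ne_top ENNReal.ofReal_ne_top
        (ENNReal.mul_ne_top ENNReal.ofReal_ne_top ENNReal.ofReal_ne_top)
    have hchain : ∫⁻ ℓ, ENNReal.ofReal ‖F m ℓ - S‖ ∂ν
        ≤ ENNReal.ofReal M * (ENNReal.ofReal (A*b^(m+1)) * ENNReal.ofReal P) := by
      refine le_trans hkey (mul_le_mul' le_rfl (le_trans hν_bad ?_))
      exact mul_le_mul' le_rfl hμ_bad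
    calc (∫⁻ ℓ, ENNReal.ofReal ‖F m ℓ - S‖ ∂ν).toReal
        ≤ (ENNReal.ofReal M * (ENNReal.ofReal (A*b^(m+1)) * ENNReal.ofReal P)).toReal :=
          ENNReal.toReal_mono hfin hchain
      _ = M * ((A*b^(m+1)) * P) := by
          rw [← ENNReal.ofReal_mul hAb0, ← ENNReal.ofReal_mul hM0,
            ENNReal.toReal_ofReal (mul_nonneg hM0 (mul_nonneg hAb0 hP0))]
  have h1 : M * ((A * b^(m+1)) * P) ≤ K₁ * ((m:ℝ)+1)^r * t^m := by
    have hMle : M ≤ ((p:ℝ)+3) * ((m:ℝ)+1)^p := by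
      have h2m : (m:ℝ)^p ≤ ((m:ℝ)+1)^p :=
        pow_le_pow_left₀ (Nat.cast_nonneg (α := ℝ) m) (by linarith) p
      rw [hMdef]
      nlinarith [hSbound, h2m]
    have e0 : 0 ≤ (A * b^(m+1)) * P := mul_nonneg hAb0 hP0
    calc M * ((A * b^(m+1)) * P) ≤ (((p:ℝ)+3) * ((m:ℝ)+1)^p) * ((A * b^(m+1)) * P) :=
          mul_le_mul_of_nonneg_right hMle e0
      _ = K₁ * ((m:ℝ)+1)^r * t^m := by
          rw [hK₁def, hPdef, htdef, hrdef, pow_add, mul_pow, pow_succ]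
          ring
  have hfinal : K₁ * ((m:ℝ)+1)^r * t^m ≤ (K₁ * C₁ / (s * a)) * a^(m+1) := by
    have hu : (((m:ℝ)+1))^r * s^(m+1) ≤ C₁ := by
      have := hC₁ (m+1)
      push_cast at this
      exact this
    have heq : K₁ * ((m:ℝ)+1)^r * t^m = (K₁/(s*a)) * ((((m:ℝ)+1))^r * s^(m+1)) * a^(m+1) := by
      rw [← hsa, mul_pow]
      have hs' : s ≠ 0 := ne_of_gt hs0
      have ha' : a ≠ 0 := ne_of_gt ha0
      field_simp
      ring
    rw [heq]
    have hK₁sa : 0 ≤ K₁/(s*a) := le_of_lt (div_pos hK₁pos (mul_pos hs0 ha0))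
    calc (K₁/(s*a)) * ((((m:ℝ)+1))^r * s^(m+1)) * a^(m+1)
        ≤ (K₁/(s*a)) * C₁ * a^(m+1) :=
          mul_le_mul_of_nonneg_right (mul_le_mul_of_nonneg_left hu hK₁sa)
            (pow_nonneg ha0.le _)
      _ = (K₁ * C₁/(s*a)) * a^(m+1) := by ring
  have hCa : (K₁ * C₁ / (s * a)) * a^(m+1) < C * a^(m+1) := by
    have hap : 0 < a^(m+1) := pow_pos ha0 (m+1)
    have hlt : K₁ * C₁ / (s*a) < C := by rw [hCdef]; linarith
    exact mul_lt_mul_of_pos_right hlt hap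
  exact lt_of_le_of_lt (le_trans habs (le_trans h1 hfinal)) hCa
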